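/- The kernel of L† : V₁ → 𝔹 equals the image of ker d₁ under the orthogonal projection π : W₁ → V₁, i.e. ker(L†) = π(ker d₁) as subspaces of V₁. (This is the claim ker ð_q^{t,p} = π(ker d_q^{t+p}) from the proof of the persistent sheaf Betti number proposition; no compatibility hypotheses relating d₀, d₁, V₀, V₁ are needed.) -/

import Mathlib

noncomputable section

open LinearMap RealInnerProductSpace

variable {W₀ W₁ W₂ : Type*}
  [NormedAddCommGroup W₀] [InnerProductSpace ℝ W₀] [FiniteDimensional ℝ W₀]
  [NormedAddCommGroup W₁] [InnerProductSpace ℝ W₁] [FiniteDimensional ℝ W₁]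
  [NormedAddCommGroup W₂] [InnerProductSpace ℝ W₂] [FiniteDimensional ℝ W₂]

/-- The compressed map `dᵗ : V₀ → V₁`, namely `π ∘ d₀` restricted to `V₀`, where
`π` is the orthogonal projection of `W₁` onto `V₁`. -/
def compressedMap (d₀ : W₀ →ₗ[ℝ] W₁) (V₀ : Submodule ℝ W₀) (V₁ : Submodule ℝ W₁) :
    V₀ →ₗ[ℝ] V₁ :=
  (Submodule.orthogonalProjectionOnto V₁).toLinearMap ∘ₗ d₀ ∘ₗ V₀.subtype

/-- The subspace `𝔹 = {e ∈ W₂ : d₁†(e) ∈ V₁}` of `W₂`. -/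
def sheafB (d₁ : W₁ →ₗ[ℝ] W₂) (V₁ : Submodule ℝ W₁) : Submodule ℝ W₂ :=
  V₁.comap (LinearMap.adjoint d₁)

/-- The map `L : 𝔹 → V₁` obtained by restricting `d₁†` to `𝔹`. -/
def sheafL (d₁ : W₁ →ₗ[ℝ] W₂) (V₁ : Submodule ℝ W₁) : sheafB d₁ V₁ →ₗ[ℝ] V₁ :=
  (LinearMap.adjoint d₁).restrict (fun _ hx => hx)

/-- The persistent sheaf Laplacian `Δ = L ∘ L† + dt ∘ dt† : V₁ → V₁`, built from
`d₁` (via `L`, the restriction of `d₁†` to `𝔹`) and a compressed map `dt`. -/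
def PSL {V₀ : Submodule ℝ W₀} (d₁ : W₁ →ₗ[ℝ] W₂) (V₁ : Submodule ℝ W₁)
    (dt : V₀ →ₗ[ℝ] V₁) : V₁ →ₗ[ℝ] V₁ :=
  sheafL d₁ V₁ ∘ₗ LinearMap.adjoint (sheafL d₁ V₁) + dt ∘ₗ LinearMap.adjoint dt


lemma map_orthogonal_eq (d₁ : W₁ →ₗ[ℝ] W₂) (V₁ : Submodule ℝ W₁) :
    Submodule.map d₁ V₁ᗮ = (sheafB d₁ V₁)ᗮ := by
  have h : (Submodule.map d₁ V₁ᗮ)ᗮ = sheafB d₁ V₁ := by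
    ext e
    simp only [Submodule.mem_orthogonal, sheafB, Submodule.mem_comap]
    constructor
    · intro h
      rw [← V₁.orthogonal_orthogonal]
      intro u hu
      have := h (d₁ u) ⟨u, hu, rfl⟩
      rw [real_inner_comm, LinearMap.adjoint_inner_left, real_inner_comm]
      exact this
    · rintro h x ⟨u, hu, rfl⟩
      have := hu (LinearMap.adjoint d₁ e) h
      rw [real_inner_comm, ← LinearMap.adjoint_inner_left]
      exact this
  rw [← h, Submodule.orthogonal_orthogonal]

/-- `ker (L†) = π (ker d₁)` as subspaces of `V₁`, where `π` is the
orthogonal projection of `W₁` onto `V₁`. -/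
theorem ker_adjoint_L_eq_proj_ker (d₁ : W₁ →ₗ[ℝ] W₂) (V₁ : Submodule ℝ W₁) :
    LinearMap.ker (LinearMap.adjoint (sheafL d₁ V₁)) =
      (LinearMap.ker d₁).map (Submodule.orthogonalProjectionOnto V₁).toLinearMap := by
  ext v
  simp only [LinearMap.mem_ker, Submodule.mem_map]
  constructor
  · intro hv
    have key : d₁ (v : W₁) ∈ (sheafB d₁ V₁)ᗮ := by
      intro b hb
      have h1 : ⟪v, sheafL d₁ V₁ ⟨b, hb⟩⟫ = 0 := by
        rw [← LinearMap.adjoint_inner_left, hv, inner_zero_left]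
      rw [← LinearMap.adjoint_inner_left, real_inner_comm]
      exact h1
    rw [← map_orthogonal_eq] at key
    obtain ⟨u, hu, hdu⟩ := key
    refine ⟨(v : W₁) - u, ?_, ?_⟩
    · simp [LinearMap.mem_ker, map_sub, hdu]
    · simp only [ContinuousLinearMap.coe_coe, map_sub]
      rw [Submodule.orthogonalProjectionOnto_mem_subspace_eq_self,
        Submodule.orthogonalProjectionOnto_apply_of_mem_orthogonal hu, sub_zero]
  · rintro ⟨w, hw, rfl⟩
    have key : ∀ b : sheafB d₁ V₁, ⟪LinearMap.adjoint (sheafL d₁ V₁)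
        ((Submodule.orthogonalProjectionOnto V₁).toLinearMap w), b⟫ = 0 := by
      intro b
      rw [LinearMap.adjoint_inner_left]
      show ⟪Submodule.orthogonalProjectionOnto V₁ w, (⟨LinearMap.adjoint d₁ (b : W₂), b.2⟩ : V₁)⟫ = 0
      rw [Submodule.inner_orthogonalProjectionOnto_eq_of_mem_right, real_inner_comm,
        LinearMap.adjoint_inner_left, hw, inner_zero_right]
    exact inner_self_eq_zero.mp (key _)
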